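/- Let T : X ⇉ X* be a pseudomonotone operator. Then T is D-maximal pseudomonotone if, and only if, T̂ = (T̂)^ρ_D, where (T̂)^ρ_D is the restriction of the pseudomonotone polar of T̂ to dom(T). -/

import Mathlib

open NormedSpace

section PseudoDefs

variable {X : Type*} [NormedAddCommGroup X] [NormedSpace ℝ X]

/-- `(x,x*) ∼_p (y,y*)`: the pseudomonotone relation. -/
def PseudoRel (p q : X × StrongDual ℝ X) : Prop :=
  min (q.2 (p.1 - q.1)) (p.2 (q.1 - p.1)) < 0 ∨
    (q.2 (p.1 - q.1) = 0 ∧ p.2 (q.1 - p.1) = 0)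

/-- An operator (identified with its graph) is pseudomonotone if any two of its
elements are pseudomonotonically related. -/
def Pseudomonotone (T : Set (X × StrongDual ℝ X)) : Prop :=
  ∀ p ∈ T, ∀ q ∈ T, PseudoRel p q

/-- The pseudomonotone polar `T^ρ`. -/
def pPolar (T : Set (X × StrongDual ℝ X)) : Set (X × StrongDual ℝ X) :=
  {p | ∀ q ∈ T, PseudoRel p q}

/-- The monotone polar `T^μ`. -/
def mPolar (T : Set (X × StrongDual ℝ X)) : Set (X × StrongDual ℝ X) :=
  {p | ∀ q ∈ T, 0 ≤ (p.2 - q.2) (p.1 - q.1)}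

/-- A monotone operator. -/
def MonotoneOp (T : Set (X × StrongDual ℝ X)) : Prop :=
  ∀ p ∈ T, ∀ q ∈ T, 0 ≤ (p.2 - q.2) (p.1 - q.1)

/-- The image `T(x)` of an operator at a point. -/
def img (T : Set (X × StrongDual ℝ X)) (x : X) : Set (StrongDual ℝ X) :=
  {x' | (x, x') ∈ T}

/-- The domain of an operator. -/
def opDom (T : Set (X × StrongDual ℝ X)) : Set X :=
  {x | (img T x).Nonempty}

/-- The set of zeros `Z_T` of an operator. -/
def zeros (T : Set (X × StrongDual ℝ X)) : Set X :=
  {x | (x, (0 : StrongDual ℝ X)) ∈ T}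

/-- The strict conic hull `cone_∘(A)` of a subset of the dual. -/
def coneS (A : Set (StrongDual ℝ X)) : Set (StrongDual ℝ X) :=
  {v | ∃ t : ℝ, 0 < t ∧ ∃ a ∈ A, v = t • a}

/-- The conic hull `cone(A)` of a subset of the dual. -/
def coneH (A : Set (StrongDual ℝ X)) : Set (StrongDual ℝ X) :=
  {v | ∃ t : ℝ, 0 ≤ t ∧ ∃ a ∈ A, v = t • a}

/-- The operator `cone_∘(T)`, with `(cone_∘(T))(x) = cone_∘(T(x))`. -/
def coneOp (T : Set (X × StrongDual ℝ X)) : Set (X × StrongDual ℝ X) :=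
  {p | p.2 ∈ coneS (img T p.1)}

/-- The normal cone `N_C(x)`. -/
def normalCone (C : Set X) (x : X) : Set (StrongDual ℝ X) :=
  {x' | ∀ y ∈ C, x' (y - x) ≤ 0}

/-- The strict normal cone `N°_C(x)`. -/
def strictNormalCone (C : Set X) (x : X) : Set (StrongDual ℝ X) :=
  {x' | ∀ y ∈ C, x' (y - x) < 0}

/-- `V_T(x) = {y : ∃ y* ∈ T(y), ⟨x - y, y*⟩ > 0}`. -/
def Vset (T : Set (X × StrongDual ℝ X)) (x : X) : Set X :=
  {y | ∃ y' ∈ img T y, 0 < y' (x - y)}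

/-- `W_T(x) = {y : ∃ y* ∈ T(y), ⟨x - y, y*⟩ = 0}`. -/
def Wset (T : Set (X × StrongDual ℝ X)) (x : X) : Set X :=
  {y | ∃ y' ∈ img T y, y' (x - y) = 0}

/-- Maximal pseudomonotonicity. -/
def MaxPseudomonotone (T : Set (X × StrongDual ℝ X)) : Prop :=
  Pseudomonotone T ∧ ∀ S : Set (X × StrongDual ℝ X), T ⊆ S → Pseudomonotone S → T = S

/-- Pre-maximal pseudomonotonicity: both `T` and `T^ρ` are pseudomonotone. -/
def PreMaxPseudomonotone (T : Set (X × StrongDual ℝ X)) : Prop :=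
  Pseudomonotone T ∧ Pseudomonotone (pPolar T)

/-- The restriction `T|_A` of an operator to a set `A`. -/
def restrictOp (T : Set (X × StrongDual ℝ X)) (A : Set X) : Set (X × StrongDual ℝ X) :=
  {p ∈ T | p.1 ∈ A}

/-- `L(T,x) = {y : ∃ y* ∈ T(y), ⟨x - y, y*⟩ ≥ 0}`. -/
def Lset (T : Set (X × StrongDual ℝ X)) (x : X) : Set X :=
  {y | ∃ y' ∈ img T y, 0 ≤ y' (x - y)}

/-- The operator `T̂ `: `T̂(x) = N_{L(T,x)}(x)` on `Z_T`, `cone_∘(T(x))` on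
`dom(T) \ Z_T`, and `∅` outside `dom(T)`. -/
def hatOp (T : Set (X × StrongDual ℝ X)) : Set (X × StrongDual ℝ X) :=
  {p | (p.1 ∈ zeros T ∧ p.2 ∈ normalCone (Lset T p.1) p.1) ∨
       (p.1 ∈ opDom T ∧ p.1 ∉ zeros T ∧ p.2 ∈ coneS (img T p.1))}

/-- Two operators are equivalent: same domain, same zeros, and the same conic
hulls of images outside the set of zeros. -/
def EquivOp (T S : Set (X × StrongDual ℝ X)) : Prop :=
  opDom T = opDom S ∧ zeros T = zeros S ∧
    ∀ x ∈ opDom T \ zeros T, coneH (img T x) = coneH (img S x)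

/-- `D`-maximal pseudomonotonicity (Hadjisavvas): `T` is pseudomonotone and some
equivalent pseudomonotone operator has no proper pseudomonotone extension with
the same domain. -/
def DMaxPseudomonotone (T : Set (X × StrongDual ℝ X)) : Prop :=
  Pseudomonotone T ∧ ∃ S : Set (X × StrongDual ℝ X), EquivOp T S ∧ Pseudomonotone S ∧
    ∀ S' : Set (X × StrongDual ℝ X), S ⊆ S' → Pseudomonotone S' → opDom S' = opDom S → S' = S

/-- The solution set of the Stampacchia variational inequality problem. -/
def SVIsol (T : Set (X × StrongDual ℝ X)) (K : Set X) : Set X :=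
  {x ∈ K | ∃ x' ∈ img T x, ∀ y ∈ K, 0 ≤ x' (y - x)}

/-- The solution set of the Minty variational inequality problem. -/
def MVIsol (T : Set (X × StrongDual ℝ X)) (K : Set X) : Set X :=
  {x ∈ K | ∀ q ∈ T, q.1 ∈ K → q.2 (x - q.1) ≤ 0}

/-- The linear perturbation `T + α*`. -/
def pertOp (T : Set (X × StrongDual ℝ X)) (α : StrongDual ℝ X) : Set (X × StrongDual ℝ X) :=
  {p | ∃ q ∈ T, p = (q.1, q.2 + α)}

end PseudoDefs

section AuxLemmas

variable {X : Type*} [NormedAddCommGroup X] [NormedSpace ℝ X]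

lemma pseudoRel_refl (p : X × StrongDual ℝ X) : PseudoRel p p := by
  right; simp

lemma pseudoRel_symm {p q : X × StrongDual ℝ X} (h : PseudoRel p q) : PseudoRel q p := by
  unfold PseudoRel at h ⊢
  rcases h with h | ⟨h1, h2⟩
  · left; rwa [min_comm]
  · right; exact ⟨h2, h1⟩

lemma key_nonpos {T : Set (X × StrongDual ℝ X)} (hT : Pseudomonotone T)
    {x y : X} (hx : x ∈ zeros T) {b : StrongDual ℝ X} (hb : b ∈ img T y) :
    b (x - y) ≤ 0 := by
  have h := hT (y, b) hb (x, 0) hx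
  unfold PseudoRel at h
  simp only [ContinuousLinearMap.zero_apply] at h
  rcases h with h | ⟨_, h2⟩
  · rcases min_lt_iff.mp h with h | h
    · exact absurd h (lt_irrefl 0)
    · exact h.le
  · exact h2.le

lemma zeros_subset_opDom (T : Set (X × StrongDual ℝ X)) : zeros T ⊆ opDom T :=
  fun _ hx => ⟨0, hx⟩

lemma zero_mem_normalCone (C : Set X) (x : X) : (0 : StrongDual ℝ X) ∈ normalCone C x := by
  intro y _; simp

lemma mem_Lset_of_zeros {T : Set (X × StrongDual ℝ X)} {x y : X} (hy : y ∈ zeros T) :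
    y ∈ Lset T x := ⟨0, hy, by simp⟩

lemma img_hatOp_of_not_zeros {T : Set (X × StrongDual ℝ X)} {x : X} (hx : x ∉ zeros T) :
    img (hatOp T) x = coneS (img T x) := by
  ext v
  constructor
  · rintro (⟨h, _⟩ | ⟨_, _, h⟩)
    · exact absurd h hx
    · exact h
  · rintro ⟨t, ht, a, ha, rfl⟩
    exact Or.inr ⟨⟨a, ha⟩, hx, ⟨t, ht, a, ha, rfl⟩⟩

lemma img_hatOp_of_zeros {T : Set (X × StrongDual ℝ X)} {x : X} (hx : x ∈ zeros T) :
    img (hatOp T) x = normalCone (Lset T x) x := by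
  ext v
  constructor
  · rintro (⟨_, h⟩ | ⟨_, h, _⟩)
    · exact h
    · exact absurd hx h
  · intro h; exact Or.inl ⟨hx, h⟩

lemma opDom_hatOp (T : Set (X × StrongDual ℝ X)) : opDom (hatOp T) = opDom T := by
  ext x
  by_cases hx : x ∈ zeros T
  · constructor
    · intro _; exact zeros_subset_opDom T hx
    · intro _
      exact ⟨0, by rw [show ((0 : StrongDual ℝ X) ∈ img (hatOp T) x) = ((0 : StrongDual ℝ X) ∈ normalCone (Lset T x) x) from by rw [img_hatOp_of_zeros hx]]; exact zero_mem_normalCone _ _⟩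
  · constructor
    · rintro ⟨v, hv⟩
      rw [img_hatOp_of_not_zeros hx] at hv
      obtain ⟨t, _, a, ha, _⟩ := hv
      exact ⟨a, ha⟩
    · rintro ⟨a, ha⟩
      refine ⟨a, ?_⟩
      rw [img_hatOp_of_not_zeros hx]
      exact ⟨1, one_pos, a, ha, (one_smul _ _).symm⟩

lemma zeros_hatOp (T : Set (X × StrongDual ℝ X)) : zeros (hatOp T) = zeros T := by
  ext x
  constructor
  · rintro (⟨h, _⟩ | ⟨_, hz, t, ht, a, ha, hta⟩)
    · exact h
    · have ha0 : a = 0 := by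
        have h0 : t • a = 0 := hta.symm
        calc a = t⁻¹ • (t • a) := (inv_smul_smul₀ (ne_of_gt ht) a).symm
        _ = 0 := by rw [h0, smul_zero]
      rw [ha0] at ha
      exact absurd ha hz
  · intro hx
    exact Or.inl ⟨hx, zero_mem_normalCone _ _⟩

lemma relZZ {T : Set (X × StrongDual ℝ X)} {p q : X × StrongDual ℝ X}
    (hpz : p.1 ∈ zeros T) (hpn : p.2 ∈ normalCone (Lset T p.1) p.1)
    (hqz : q.1 ∈ zeros T) (hqn : q.2 ∈ normalCone (Lset T q.1) q.1) :
    PseudoRel p q := by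
  have h1 : p.2 (q.1 - p.1) ≤ 0 := hpn q.1 (mem_Lset_of_zeros hqz)
  have h2 : q.2 (p.1 - q.1) ≤ 0 := hqn p.1 (mem_Lset_of_zeros hpz)
  unfold PseudoRel
  rcases h1.lt_or_eq with h | h
  · exact Or.inl (lt_of_le_of_lt (min_le_right _ _) h)
  rcases h2.lt_or_eq with h' | h'
  · exact Or.inl (lt_of_le_of_lt (min_le_left _ _) h')
  · exact Or.inr ⟨h', h⟩

lemma relZN {T : Set (X × StrongDual ℝ X)} (hT : Pseudomonotone T) {p q : X × StrongDual ℝ X}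
    (hpz : p.1 ∈ zeros T) (hpn : p.2 ∈ normalCone (Lset T p.1) p.1)
    (hqc : q.2 ∈ coneS (img T q.1)) :
    PseudoRel p q := by
  obtain ⟨t, ht, b, hb, hq2⟩ := hqc
  have hb0 : b (p.1 - q.1) ≤ 0 := key_nonpos hT hpz hb
  unfold PseudoRel
  rcases hb0.lt_or_eq with h | h
  · have : q.2 (p.1 - q.1) < 0 := by
      rw [hq2]
      simp only [ContinuousLinearMap.smul_apply, smul_eq_mul]
      exact mul_neg_of_pos_of_neg ht h
    exact Or.inl (lt_of_le_of_lt (min_le_left _ _) this)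
  · have hL : q.1 ∈ Lset T p.1 := ⟨b, hb, h.ge⟩
    have h1 : p.2 (q.1 - p.1) ≤ 0 := hpn q.1 hL
    rcases h1.lt_or_eq with h' | h'
    · exact Or.inl (lt_of_le_of_lt (min_le_right _ _) h')
    · refine Or.inr ⟨?_, h'⟩
      rw [hq2]
      simp only [ContinuousLinearMap.smul_apply, smul_eq_mul]
      rw [h, mul_zero]

lemma relNN {T : Set (X × StrongDual ℝ X)} (hT : Pseudomonotone T) {p q : X × StrongDual ℝ X}
    (hpc : p.2 ∈ coneS (img T p.1)) (hqc : q.2 ∈ coneS (img T q.1)) :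
    PseudoRel p q := by
  obtain ⟨s, hs, a, ha, hp2⟩ := hpc
  obtain ⟨t, ht, b, hb, hq2⟩ := hqc
  have h := hT (p.1, a) ha (q.1, b) hb
  unfold PseudoRel at h ⊢
  rw [hp2, hq2]
  simp only [ContinuousLinearMap.smul_apply, smul_eq_mul] at h ⊢
  rcases h with h | ⟨h1, h2⟩
  · left
    rcases min_lt_iff.mp h with h | h
    · exact min_lt_iff.mpr (Or.inl (mul_neg_of_pos_of_neg ht h))
    · exact min_lt_iff.mpr (Or.inr (mul_neg_of_pos_of_neg hs h))
  · right; exact ⟨by rw [h1, mul_zero], by rw [h2, mul_zero]⟩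

lemma hatOp_pseudo {T : Set (X × StrongDual ℝ X)} (hT : Pseudomonotone T) :
    Pseudomonotone (hatOp T) := by
  intro p hp q hq
  rcases hp with ⟨hpz, hpn⟩ | ⟨_, _, hpc⟩
  · rcases hq with ⟨hqz, hqn⟩ | ⟨_, _, hqc⟩
    · exact relZZ hpz hpn hqz hqn
    · exact relZN hT hpz hpn hqc
  · rcases hq with ⟨hqz, hqn⟩ | ⟨_, _, hqc⟩
    · exact pseudoRel_symm (relZN hT hqz hqn hpc)
    · exact relNN hT hpc hqc

lemma subset_hat {S : Set (X × StrongDual ℝ X)} (hS : Pseudomonotone S) : S ⊆ hatOp S := by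
  intro p hp
  by_cases hz : p.1 ∈ zeros S
  · left
    refine ⟨hz, ?_⟩
    intro y hy
    obtain ⟨y', hy', hpos⟩ := hy
    have h := hS p hp (y, y') hy'
    unfold PseudoRel at h
    rcases h with h | ⟨_, h2⟩
    · rcases min_lt_iff.mp h with h | h
      · exact absurd h (not_lt.mpr hpos)
      · exact h.le
    · exact h2.le
  · exact Or.inr ⟨⟨p.2, hp⟩, hz, 1, one_pos, p.2, hp, (one_smul _ _).symm⟩

lemma equivOp_symm {T S : Set (X × StrongDual ℝ X)} (h : EquivOp T S) : EquivOp S T := by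
  refine ⟨h.1.symm, h.2.1.symm, fun x hx => ?_⟩
  have hx' : x ∈ opDom T \ zeros T := by
    rw [h.1, h.2.1]; exact hx
  exact (h.2.2 x hx').symm

lemma Lset_subset_of_equiv {T S : Set (X × StrongDual ℝ X)} (h : EquivOp T S) (x : X) :
    Lset T x ⊆ Lset S x := by
  rintro y ⟨y', hy', hpos⟩
  by_cases hz : y ∈ zeros T
  · exact mem_Lset_of_zeros (h.2.1 ▸ hz)
  · have hy_dom : y ∈ opDom T := ⟨y', hy'⟩
    have hy0 : y' ≠ 0 := fun e => hz (by rw [e] at hy'; exact hy')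
    have hmem : y' ∈ coneH (img S y) := by
      rw [← h.2.2 y ⟨hy_dom, hz⟩]
      exact ⟨1, zero_le_one, y', hy', (one_smul _ _).symm⟩
    obtain ⟨t, ht, a, ha, hya⟩ := hmem
    have ht' : 0 < t := by
      rcases ht.lt_or_eq with h' | h'
      · exact h'
      · exact absurd (by rw [hya, ← h', zero_smul]) hy0
    refine ⟨a, ha, ?_⟩
    have heq : y' (x - y) = t * a (x - y) := by
      rw [hya]; simp
    nlinarith [hpos, heq, ht']

lemma coneS_subset_of_equiv {T S : Set (X × StrongDual ℝ X)} (h : EquivOp T S) {x : X}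
    (hx : x ∈ opDom T \ zeros T) : coneS (img T x) ⊆ coneS (img S x) := by
  rintro v ⟨t, ht, a, ha, rfl⟩
  have ha' : a ∈ coneH (img S x) := by
    rw [← h.2.2 x hx]
    exact ⟨1, zero_le_one, a, ha, (one_smul _ _).symm⟩
  obtain ⟨s, hs, b, hb, hab⟩ := ha'
  have ha0 : a ≠ 0 := fun e => hx.2 (by rw [e] at ha; exact ha)
  have hs' : 0 < s := by
    rcases hs.lt_or_eq with h' | h'
    · exact h'
    · exact absurd (by rw [hab, ← h', zero_smul]) ha0
  exact ⟨t * s, mul_pos ht hs', b, hb, by rw [hab, smul_smul]⟩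

lemma hatOp_subset_of_equiv {T S : Set (X × StrongDual ℝ X)} (h : EquivOp T S) :
    hatOp T ⊆ hatOp S := by
  have h' := equivOp_symm h
  rintro p (⟨hz, hn⟩ | ⟨hd, hz, hc⟩)
  · left
    refine ⟨h.2.1 ▸ hz, fun y hy => hn y (Lset_subset_of_equiv h' p.1 hy)⟩
  · right
    refine ⟨h.1 ▸ hd, fun hzS => hz (h.2.1 ▸ hzS), coneS_subset_of_equiv h ⟨hd, hz⟩ hc⟩

lemma hatOp_eq_of_equiv {T S : Set (X × StrongDual ℝ X)} (h : EquivOp T S) :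
    hatOp T = hatOp S :=
  Set.Subset.antisymm (hatOp_subset_of_equiv h) (hatOp_subset_of_equiv (equivOp_symm h))

lemma coneH_coneS {A : Set (StrongDual ℝ X)} (hA : A.Nonempty) :
    coneH (coneS A) = coneH A := by
  ext v
  constructor
  · rintro ⟨t, ht, a, ⟨s, hs, b, hb, rfl⟩, rfl⟩
    exact ⟨t * s, mul_nonneg ht hs.le, b, hb, smul_smul t s b⟩
  · rintro ⟨t, ht, a, ha, rfl⟩
    rcases ht.lt_or_eq with h | h
    · exact ⟨1, zero_le_one, t • a, ⟨t, h, a, ha, rfl⟩, (one_smul _ _).symm⟩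
    · obtain ⟨b, hb⟩ := hA
      exact ⟨0, le_rfl, b, ⟨1, one_pos, b, hb, (one_smul _ _).symm⟩, by rw [← h]; simp⟩

lemma equivOp_hat (T : Set (X × StrongDual ℝ X)) : EquivOp T (hatOp T) := by
  refine ⟨(opDom_hatOp T).symm, (zeros_hatOp T).symm, fun x hx => ?_⟩
  rw [img_hatOp_of_not_zeros hx.2, coneH_coneS hx.1]

lemma eq_restrict_polar_of_max {S : Set (X × StrongDual ℝ X)} (hS : Pseudomonotone S)
    (hMax : ∀ S', S ⊆ S' → Pseudomonotone S' → opDom S' = opDom S → S' = S) :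
    S = restrictOp (pPolar S) (opDom S) := by
  apply Set.Subset.antisymm
  · intro p hp
    exact ⟨fun q hq => hS p hp q hq, ⟨p.2, hp⟩⟩
  · rintro p ⟨hpol, hdom⟩
    have hpm : Pseudomonotone (insert p S) := by
      intro a ha b hb
      rcases Set.mem_insert_iff.mp ha with hA | hA
      · rcases Set.mem_insert_iff.mp hb with hB | hB
        · rw [hA, hB]; exact pseudoRel_refl _
        · rw [hA]; exact hpol b hB
      · rcases Set.mem_insert_iff.mp hb with hB | hB
        · rw [hB]; exact pseudoRel_symm (hpol a hA)
        · exact hS a hA b hB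
    have hdom' : opDom (insert p S) = opDom S := by
      ext x
      constructor
      · rintro ⟨v, hv⟩
        rcases Set.mem_insert_iff.mp hv with hv | hv
        · have : x = p.1 := congrArg Prod.fst hv
          rwa [this]
        · exact ⟨v, hv⟩
      · rintro ⟨v, hv⟩
        exact ⟨v, Or.inr hv⟩
    have heq := hMax _ (Set.subset_insert p S) hpm hdom'
    rw [← heq]
    exact Set.mem_insert _ _

lemma max_of_eq_restrict_polar {S : Set (X × StrongDual ℝ X)}
    (hfix : S = restrictOp (pPolar S) (opDom S)) :
    ∀ S', S ⊆ S' → Pseudomonotone S' → opDom S' = opDom S → S' = S := by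
  intro S' hsub hpm hdom
  apply Set.Subset.antisymm _ hsub
  intro p hp
  rw [hfix]
  refine ⟨fun q hq => hpm p hp q (hsub hq), ?_⟩
  have hd : p.1 ∈ opDom S' := ⟨p.2, hp⟩
  rwa [hdom] at hd

end AuxLemmas

theorem dMax_iff_hat_eq_polar_restricted
    {X : Type*} [NormedAddCommGroup X] [NormedSpace ℝ X]
    (T : Set (X × StrongDual ℝ X)) (hT : Pseudomonotone T) :
    DMaxPseudomonotone T ↔ hatOp T = restrictOp (pPolar (hatOp T)) (opDom T) := by
  constructor
  · rintro ⟨_, S, hEq, hSpm, hMax⟩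
    have hhatTS : hatOp T = hatOp S := hatOp_eq_of_equiv hEq
    have hSeq : hatOp S = S :=
      hMax _ (subset_hat hSpm) (hatOp_pseudo hSpm) (opDom_hatOp S)
    have hfix : S = restrictOp (pPolar S) (opDom S) :=
      eq_restrict_polar_of_max hSpm hMax
    rw [hhatTS, hSeq, hEq.1]
    exact hfix
  · intro h
    refine ⟨hT, hatOp T, equivOp_hat T, hatOp_pseudo hT, ?_⟩
    apply max_of_eq_restrict_polar
    rw [opDom_hatOp]
    exact h
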